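/- arXiv:2403.02521 — 6 statements merged into one kernel-verified Lean document; each statement's English description precedes it below -/
import Mathlib

section
/- Let U ⊆ ℂ be a nonempty connected open set and let E ⊆ U be relatively closed in U with U \ E nonempty. Suppose every bounded holomorphic function on U \ E admits a holomorphic extension to U. Then for every bounded holomorphic f on U \ E: (i) any two holomorphic functions on U extending f coincide on U; and (ii) every holomorphic extension F of f to U satisfies sup_{z ∈ U} |F(z)| = sup_{z ∈ U \ E} |f(z)| (in particular F is bounded). -/
open Complex Set

/-- `f` is bounded holomorphic on the open set `Ω`. -/
def BddHolo (f : ℂ → ℂ) (Ω : Set ℂ) : Prop :=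
  DifferentiableOn ℂ f Ω ∧ ∃ M : ℝ, ∀ z ∈ Ω, ‖f z‖ ≤ M

/-- Identity theorem helper: two holomorphic functions on a connected open set that
agree on a nonempty open subset agree everywhere. -/
lemma eqOn_of_eqOn_open_aux {U V : Set ℂ} {F G : ℂ → ℂ} (hUopen : IsOpen U)
    (hconn : IsPreconnected U) (hF : DifferentiableOn ℂ F U)
    (hG : DifferentiableOn ℂ G U) (hVopen : IsOpen V) (hVU : V ⊆ U)
    (hVne : V.Nonempty) (h : Set.EqOn F G V) : Set.EqOn F G U := by
  obtain ⟨z₀, hz₀⟩ := hVne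
  exact (hF.analyticOnNhd hUopen).eqOn_of_preconnected_of_eventuallyEq
    (hG.analyticOnNhd hUopen) hconn (hVU hz₀)
    (Filter.eventuallyEq_of_mem (hVopen.mem_nhds hz₀) h)

theorem stmt_1 (U E : Set ℂ) (hUopen : IsOpen U) (hUne : U.Nonempty)
    (hUconn : IsConnected U) (hEU : E ⊆ U) (hrelclosed : IsOpen (U \ E))
    (hne : (U \ E).Nonempty)
    (hext : ∀ f : ℂ → ℂ, BddHolo f (U \ E) →
      ∃ F : ℂ → ℂ, DifferentiableOn ℂ F U ∧ ∀ z ∈ U \ E, F z = f z) :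
    ∀ f : ℂ → ℂ, BddHolo f (U \ E) →
      -- (i) uniqueness of holomorphic extensions
      (∀ F G : ℂ → ℂ, DifferentiableOn ℂ F U → (∀ z ∈ U \ E, F z = f z) →
        DifferentiableOn ℂ G U → (∀ z ∈ U \ E, G z = f z) → Set.EqOn F G U) ∧
      -- (ii) every holomorphic extension is bounded and norm preserving
      (∀ F : ℂ → ℂ, DifferentiableOn ℂ F U → (∀ z ∈ U \ E, F z = f z) →
        (∃ M : ℝ, ∀ z ∈ U, ‖F z‖ ≤ M) ∧
        sSup ((fun z => ‖F z‖) '' U)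
          = sSup ((fun z => ‖f z‖) '' (U \ E))) := by
  intro f hf
  have hsub : U \ E ⊆ U := diff_subset
  constructor
  · intro F G hF hFf hG hGf
    exact eqOn_of_eqOn_open_aux hUopen hUconn.isPreconnected hF hG hrelclosed hsub hne
      (fun z hz => (hFf z hz).trans (hGf z hz).symm)
  · intro F hF hFf
    obtain ⟨M₀, hM₀⟩ := hf.2
    set M : ℝ := sSup ((fun z => ‖f z‖) '' (U \ E)) with hMdef
    have hbdd : BddAbove ((fun z => ‖f z‖) '' (U \ E)) :=
      ⟨M₀, by rintro _ ⟨z, hz, rfl⟩; exact hM₀ z hz⟩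
    have hMub : ∀ z ∈ U \ E, ‖f z‖ ≤ M :=
      fun z hz => le_csSup hbdd ⟨z, hz, rfl⟩
    -- key claim: |F| ≤ M on U
    have key : ∀ z ∈ U, ‖F z‖ ≤ M := by
      intro z₀ hz₀
      by_contra hgt
      push_neg at hgt
      set c : ℂ := F z₀ with hc
      have hcM : M < ‖c‖ := hgt
      -- F z ≠ c on U \ E
      have hne' : ∀ z ∈ U \ E, F z - c ≠ 0 := by
        intro z hz h0
        have : ‖F z‖ = ‖c‖ := by
          rw [sub_eq_zero] at h0; rw [h0]
        have := (hFf z hz) ▸ this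
        exact absurd (this ▸ hMub z hz) (not_le.mpr hcM)
      -- g = 1/(F - c) is bounded holomorphic on U \ E
      have hg : BddHolo (fun z => (F z - c)⁻¹) (U \ E) := by
        refine ⟨DifferentiableOn.inv ((hF.mono hsub).sub (differentiableOn_const c)) hne', ?_⟩
        refine ⟨(‖c‖ - M)⁻¹, fun z hz => ?_⟩
        rw [norm_inv]
        have h2 : ‖F z‖ ≤ M := by rw [hFf z hz]; exact hMub z hz
        have h1 : ‖c‖ - M ≤ ‖F z - c‖ :=
          calc ‖c‖ - M ≤ ‖c‖ - ‖F z‖ := by linarith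
            _ ≤ ‖c - F z‖ := by
                simpa using norm_sub_norm_le c (F z)
            _ = ‖F z - c‖ := by rw [norm_sub_rev]
        exact inv_anti₀ (by linarith) h1
      obtain ⟨G, hG, hGg⟩ := hext _ hg
      -- G * (F - c) = 1 on U \ E, hence on U
      have heq : Set.EqOn (fun z => G z * (F z - c)) (fun _ => 1) U := by
        apply eqOn_of_eqOn_open_aux hUopen hUconn.isPreconnected
          (hG.mul (hF.sub (differentiableOn_const c)))
          (differentiableOn_const 1) hrelclosed hsub hne
        intro z hz
        simp only
        show G z * (F z - c) = 1
        rw [hGg z hz, inv_mul_cancel₀ (hne' z hz)]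
      have := heq hz₀
      simp only [← hc, sub_self, mul_zero] at this
      exact one_ne_zero this.symm
    refine ⟨⟨M, key⟩, ?_⟩
    have h1 : sSup ((fun z => ‖F z‖) '' U) ≤ M := by
      apply csSup_le (hUne.image _)
      rintro _ ⟨z, hz, rfl⟩
      exact key z hz
    have h2 : M ≤ sSup ((fun z => ‖F z‖) '' U) := by
      apply csSup_le (hne.image _)
      rintro _ ⟨z, hz, rfl⟩
      show ‖f z‖ ≤ _
      rw [← hFf z hz]
      exact le_csSup ⟨M, by rintro _ ⟨w, hw, rfl⟩; exact key w hw⟩ ⟨z, hsub hz, rfl⟩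
    linarith
end

section
/- Let 𝔻 = {z ∈ ℂ : |z| < 1} and let E ⊆ 𝔻 be relatively closed in 𝔻 with 𝔻 \ E nonempty. If every bounded holomorphic function on 𝔻 \ E admits a holomorphic extension to 𝔻, then 𝔻 \ E is connected. -/
open Complex Set Metric

theorem stmt_2 (E : Set ℂ) (hE : E ⊆ ball (0 : ℂ) 1)
    (hrelclosed : IsOpen (ball (0 : ℂ) 1 \ E))
    (hne : (ball (0 : ℂ) 1 \ E).Nonempty)
    (hext : ∀ f : ℂ → ℂ, BddHolo f (ball (0 : ℂ) 1 \ E) →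
      ∃ F : ℂ → ℂ, DifferentiableOn ℂ F (ball (0 : ℂ) 1) ∧
        ∀ z ∈ ball (0 : ℂ) 1 \ E, F z = f z) :
    IsConnected (ball (0 : ℂ) 1 \ E) := by
  refine ⟨hne, ?_⟩
  rintro u v hu hv hcov ⟨a, haΩ, hau⟩ ⟨b, hbΩ, hbv⟩
  by_contra hempty
  set Ω := ball (0:ℂ) 1 \ E with hΩdef
  set U := Ω ∩ u with hU
  set V := Ω ∩ v with hV
  have hUopen : IsOpen U := hrelclosed.inter hu
  have hVopen : IsOpen V := hrelclosed.inter hv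
  have hdisj : ∀ z ∈ V, z ∉ U := by
    intro z hz hzU
    exact hempty ⟨z, hzU.1, hzU.2, hz.2⟩
  set f : ℂ → ℂ := U.indicator 1 with hf
  have hfd : DifferentiableOn ℂ f Ω := by
    intro x hx
    rcases hcov hx with hxu | hxv
    · have h1 : f =ᶠ[nhds x] (fun _ => 1) :=
        Filter.eventuallyEq_of_mem (hUopen.mem_nhds ⟨hx, hxu⟩)
          (fun z hz => Set.indicator_of_mem hz 1)
      exact (h1.differentiableAt_iff.mpr (differentiableAt_const 1)).differentiableWithinAt
    · have h0 : f =ᶠ[nhds x] (fun _ => 0) :=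
        Filter.eventuallyEq_of_mem (hVopen.mem_nhds ⟨hx, hxv⟩)
          (fun z hz => Set.indicator_of_notMem (hdisj z hz) 1)
      exact (h0.differentiableAt_iff.mpr (differentiableAt_const 0)).differentiableWithinAt
  obtain ⟨F, hFd, hFe⟩ := hext f ⟨hfd, 1, by
    intro z hz
    by_cases h : z ∈ U
    · simp [hf, Set.indicator_of_mem h]
    · simp [hf, Set.indicator_of_notMem h]⟩
  have hFan : AnalyticOnNhd ℂ F (ball (0:ℂ) 1) := hFd.analyticOnNhd isOpen_ball
  have h1an : AnalyticOnNhd ℂ (fun _ : ℂ => (1:ℂ)) (ball (0:ℂ) 1) := analyticOnNhd_const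
  have haU : a ∈ U := ⟨haΩ, hau⟩
  have heq : F =ᶠ[nhds a] (fun _ => 1) :=
    Filter.eventuallyEq_of_mem (hUopen.mem_nhds haU)
      (fun z hz => by rw [hFe z hz.1]; exact Set.indicator_of_mem hz 1)
  have hEqOn := hFan.eqOn_of_preconnected_of_eventuallyEq h1an
      (convex_ball (0:ℂ) 1).isPreconnected haΩ.1 heq
  have hFb : F b = 1 := hEqOn hbΩ.1
  have hFb0 : F b = 0 := by
    rw [hFe b hbΩ]
    exact Set.indicator_of_notMem (hdisj b ⟨hbΩ, hbv⟩) 1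
  rw [hFb] at hFb0
  exact one_ne_zero hFb0
end

section
/- Let A ⊆ 𝔻 be a dominating set, i.e., for every bounded holomorphic function Φ on 𝔻 one has sup_{a ∈ A} |Φ(a)| = sup_{z ∈ 𝔻} |Φ(z)|. Then the family (1 − |a|)_{a ∈ A} is not summable; i.e., the Blaschke condition fails: ∑_{a ∈ A} (1 − |a|) = ∞. -/
open Complex Set Metric

/-- Normalized Blaschke factor. -/
noncomputable def blas (c z : ℂ) : ℂ :=
  if c = 0 then z else ((‖c‖ : ℂ) / c) * (c - z) / (1 - (starRingEnd ℂ) c * z)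

lemma blas_den_ne {c z : ℂ} (hc : ‖c‖ < 1) (hz : ‖z‖ < 1) :
    (1 : ℂ) - (starRingEnd ℂ) c * z ≠ 0 := by
  intro h
  have h1 : (starRingEnd ℂ) c * z = 1 := by
    have := sub_eq_zero.mp h; exact this.symm
  have h2 : ‖(starRingEnd ℂ) c * z‖ < 1 := by
    rw [norm_mul, Complex.norm_conj]
    nlinarith [norm_nonneg c, norm_nonneg z]
  rw [h1] at h2; simp at h2

lemma blas_normSq_ident (c z : ℂ) :
    Complex.normSq (1 - (starRingEnd ℂ) c * z) - Complex.normSq (c - z)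
      = (1 - Complex.normSq c) * (1 - Complex.normSq z) := by
  simp only [Complex.normSq_apply, Complex.sub_re, Complex.sub_im, Complex.mul_re,
    Complex.mul_im, Complex.one_re, Complex.one_im, Complex.conj_re, Complex.conj_im]
  ring

lemma blas_num_le_den {c z : ℂ} (hc : ‖c‖ < 1) (hz : ‖z‖ < 1) :
    ‖c - z‖ ≤ ‖1 - (starRingEnd ℂ) c * z‖ := by
  have h1 : Complex.normSq c < 1 := by
    rw [← Complex.sq_norm]; nlinarith [norm_nonneg c]
  have h2 : Complex.normSq z < 1 := by
    rw [← Complex.sq_norm]; nlinarith [norm_nonneg z]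
  have h := blas_normSq_ident c z
  have h3 : Complex.normSq (c - z) ≤ Complex.normSq (1 - (starRingEnd ℂ) c * z) := by nlinarith
  rw [Complex.norm_def, Complex.norm_def]
  exact Real.sqrt_le_sqrt h3

lemma blas_abs_le_one {c z : ℂ} (hc : ‖c‖ < 1) (hz : ‖z‖ < 1) :
    ‖blas c z‖ ≤ 1 := by
  unfold blas
  split_ifs with h
  · exact hz.le
  · have hden := blas_den_ne hc hz
    rw [norm_div, norm_mul, norm_div, Complex.norm_real, Real.norm_eq_abs,
      _root_.abs_of_nonneg (norm_nonneg c),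
      div_self (by simpa [norm_eq_zero] using h), one_mul]
    rw [div_le_one (norm_pos_iff.mpr hden)]
    exact blas_num_le_den hc hz

lemma blas_self (c : ℂ) : blas c c = 0 := by
  unfold blas; split_ifs with h
  · exact h
  · simp

lemma blas_ne_zero {c z : ℂ} (hc : ‖c‖ < 1) (hz : ‖z‖ < 1) (hne : z ≠ c) :
    blas c z ≠ 0 := by
  unfold blas; split_ifs with h
  · simpa [h] using hne
  · have hden := blas_den_ne hc hz
    apply div_ne_zero _ hden
    apply mul_ne_zero
    · apply div_ne_zero _ h
      simpa using (by simpa [norm_eq_zero] using h : ‖c‖ ≠ 0)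
    · exact sub_ne_zero.mpr fun hcz => hne hcz.symm

lemma blas_diff {c : ℂ} (hc : ‖c‖ < 1) :
    DifferentiableOn ℂ (blas c) (ball (0 : ℂ) 1) := by
  unfold blas; split_ifs with h
  · exact differentiableOn_id
  · apply DifferentiableOn.div
    · exact (differentiableOn_const _).mul ((differentiableOn_const _).sub differentiableOn_id)
    · exact (differentiableOn_const _).sub ((differentiableOn_const _).mul differentiableOn_id)
    · intro z hz
      have hz1 : ‖z‖ < 1 := by
        simpa [mem_ball, Complex.dist_eq] using hz
      exact blas_den_ne hc hz1

lemma blas_mul_ident {c z : ℂ} (hc0 : c ≠ 0) (hden : (1 : ℂ) - (starRingEnd ℂ) c * z ≠ 0) :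
    (1 - blas c z) * (c * (1 - (starRingEnd ℂ) c * z))
      = (1 - (‖c‖ : ℂ)) * (c + (‖c‖ : ℂ) * z) := by
  have hcc : (starRingEnd ℂ) c * c = ((‖c‖ : ℂ)) ^ 2 := by
    rw [mul_comm, Complex.mul_conj, Complex.normSq_eq_norm_sq]
    push_cast; ring
  unfold blas
  rw [if_neg hc0]
  have hden' : (1 : ℂ) - z * (starRingEnd ℂ) c ≠ 0 := by rwa [mul_comm]
  field_simp
  linear_combination (-z) * hcc

lemma one_sub_blas_abs_le {c z : ℂ} {ρ : ℝ} (hρ1 : ρ < 1)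
    (hc1 : ‖c‖ < 1) (hc2 : 1 / 2 ≤ ‖c‖) (hz : ‖z‖ ≤ ρ)
    (hρ0 : 0 ≤ ρ) :
    ‖1 - blas c z‖ ≤ 4 / (1 - ρ) * (1 - ‖c‖) := by
  have hz1 : ‖z‖ < 1 := lt_of_le_of_lt hz hρ1
  have hc0 : c ≠ 0 := by
    intro h; rw [h] at hc2; simp at hc2; linarith
  have hden := blas_den_ne hc1 hz1
  have hid := blas_mul_ident (c := c) (z := z) hc0 hden
  have habs := congrArg norm hid
  rw [norm_mul, norm_mul, norm_mul] at habs
  have h1 : ‖1 - (‖c‖ : ℂ)‖ = 1 - ‖c‖ := by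
    rw [show (1 : ℂ) - (‖c‖ : ℂ) = ((1 - ‖c‖ : ℝ) : ℂ) by push_cast; ring,
      Complex.norm_real, Real.norm_eq_abs, _root_.abs_of_nonneg (by linarith)]
  have h2 : ‖c + (‖c‖ : ℂ) * z‖ ≤ 2 := by
    calc ‖c + (‖c‖ : ℂ) * z‖
        ≤ ‖c‖ + ‖(‖c‖ : ℂ) * z‖ := norm_add_le _ _
      _ ≤ 1 + 1 := by
          rw [norm_mul, Complex.norm_real, Real.norm_eq_abs, _root_.abs_of_nonneg (norm_nonneg c)]
          have : ‖c‖ * ‖z‖ ≤ 1 := by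
            nlinarith [norm_nonneg c, norm_nonneg z]
          gcongr ?_ + ?_ <;> linarith
      _ = 2 := by norm_num
  have h3 : 1 - ρ ≤ ‖1 - (starRingEnd ℂ) c * z‖ := by
    have := norm_sub_norm_le (1 : ℂ) ((starRingEnd ℂ) c * z)
    rw [norm_one] at this
    have h4 : ‖(starRingEnd ℂ) c * z‖ ≤ ρ := by
      rw [norm_mul, Complex.norm_conj]
      nlinarith [norm_nonneg c, norm_nonneg z]
    linarith
  have h5 : ‖1 - blas c z‖ * (‖c‖ * ‖1 - (starRingEnd ℂ) c * z‖)
      ≤ (1 - ‖c‖) * 2 := by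
    rw [habs, h1]
    have := norm_nonneg (1 - (‖c‖ : ℂ))
    nlinarith [norm_nonneg (c + (‖c‖ : ℂ) * z)]
  have h6 : 1 / 2 * (1 - ρ) ≤ ‖c‖ * ‖1 - (starRingEnd ℂ) c * z‖ := by
    have hd0 : (0:ℝ) < ‖1 - (starRingEnd ℂ) c * z‖ := norm_pos_iff.mpr hden
    nlinarith
  have h7 : 0 ≤ ‖1 - blas c z‖ := norm_nonneg _
  have h8 : (0:ℝ) < 1 - ρ := by linarith
  rw [div_mul_eq_mul_div, le_div_iff₀ h8]
  nlinarith

theorem stmt_3 (A : Set ℂ) (hA : A ⊆ ball (0 : ℂ) 1)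
    (hdom : ∀ Φ : ℂ → ℂ, BddHolo Φ (ball (0 : ℂ) 1) →
      sSup ((fun z => ‖Φ z‖) '' A)
        = sSup ((fun z => ‖Φ z‖) '' ball (0 : ℂ) 1)) :
    ¬ Summable (fun a : A => 1 - ‖(a : ℂ)‖) := by
  intro hS
  classical
  have habsA : ∀ a : A, ‖(a : ℂ)‖ < 1 := by
    intro a
    have := hA a.2
    simpa [mem_ball, Complex.dist_eq] using this
  have hpos : ∀ a : A, 0 < 1 - ‖(a : ℂ)‖ := fun a => by linarith [habsA a]
  set Φ : ℂ → ℂ := fun z => ∏' a : A, blas (a : ℂ) z with hΦdef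
  -- Φ vanishes on A
  have hzero : ∀ a ∈ A, Φ a = 0 := by
    intro a ha
    have hP : HasProd (fun x : A => blas (x : ℂ) a) 0 := by
      have hev : ∀ᶠ s : Finset A in Filter.atTop,
          (0 : ℂ) = ∏ x ∈ s, blas (x : ℂ) a := by
        filter_upwards [Filter.eventually_ge_atTop ({⟨a, ha⟩} : Finset A)] with s hs
        refine (Finset.prod_eq_zero (i := (⟨a, ha⟩ : A))
          (hs (Finset.mem_singleton_self _)) ?_).symm
        exact blas_self a
      exact tendsto_const_nhds.congr' hev
    exact hP.tprod_eq.symm ▸ rfl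
  -- |Φ| ≤ 1 on the ball
  have habsle : ∀ z ∈ ball (0 : ℂ) 1, ‖Φ z‖ ≤ 1 := by
    intro z hz
    have hz1 : ‖z‖ < 1 := by simpa [mem_ball, Complex.dist_eq] using hz
    by_cases hm : Multipliable fun a : A => blas (a : ℂ) z
    · have ht : Filter.Tendsto (fun s : Finset A => ‖∏ x ∈ s, blas (x : ℂ) z‖)
          Filter.atTop (nhds (‖Φ z‖)) :=
        (continuous_norm.continuousAt.tendsto.comp hm.hasProd)
      refine le_of_tendsto ht (Filter.Eventually.of_forall fun s => ?_)
      rw [norm_prod]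
      exact Finset.prod_le_one (fun a _ => norm_nonneg _)
        (fun a _ => blas_abs_le_one (habsA a) hz1)
    · rw [hΦdef]
      simp only [tprod_eq_one_of_not_multipliable hm, norm_one, le_refl]
  -- key local structure
  have key : ∀ ρ : ℝ, 0 < ρ → ρ < 1 →
      DifferentiableOn ℂ Φ (ball (0 : ℂ) ρ) ∧
        ∀ z ∈ ball (0 : ℂ) ρ, z ∉ A → Φ z ≠ 0 := by
    intro ρ hρ0 hρ1
    set ε : ℝ := min (1 / 2) ((1 - ρ) / 8) with hεdef
    have hε : 0 < ε := by
      apply lt_min (by norm_num)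
      linarith
    set F : Set A := {a : A | ε ≤ 1 - ‖(a : ℂ)‖} with hFdef
    have hFfin : F.Finite := by
      have h1 : Filter.Tendsto (fun a : A => 1 - ‖(a : ℂ)‖)
          Filter.cofinite (nhds 0) := hS.tendsto_cofinite_zero
      have h2 : ∀ᶠ a : A in Filter.cofinite, 1 - ‖(a : ℂ)‖ < ε :=
        h1.eventually_lt_const hε
      have h3 := Filter.eventually_cofinite.mp h2
      refine h3.subset ?_
      intro a ha
      simp only [hFdef, mem_setOf_eq] at ha ⊢
      exact not_lt.mpr ha
    haveI : Fintype F := hFfin.fintype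
    -- bounds for the tail
    have htail : ∀ a : A, a ∉ F → ∀ z : ℂ, ‖z‖ < ρ →
        ‖1 - blas (a : ℂ) z‖ ≤ 4 / (1 - ρ) * (1 - ‖(a : ℂ)‖) := by
      intro a ha z hzρ
      have h1 : 1 - ‖(a : ℂ)‖ < ε := by
        by_contra h
        exact ha (by simpa [hFdef] using not_lt.mp h)
      have h2 : 1 / 2 ≤ ‖(a : ℂ)‖ := by
        have := min_le_left (1/2 : ℝ) ((1 - ρ) / 8)
        rw [← hεdef] at this
        linarith
      exact one_sub_blas_abs_le hρ1 (habsA a) h2 hzρ.le hρ0.le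
    have hhalf : ∀ a : A, a ∉ F → ∀ z : ℂ, ‖z‖ < ρ →
        ‖1 - blas (a : ℂ) z‖ ≤ 1 / 2 := by
      intro a ha z hzρ
      have h1 := htail a ha z hzρ
      have h2 : 1 - ‖(a : ℂ)‖ < ε := by
        by_contra h
        exact ha (by simpa [hFdef] using not_lt.mp h)
      have h3 : ε ≤ (1 - ρ) / 8 := min_le_right _ _
      have h8 : (0:ℝ) < 1 - ρ := by linarith
      have hmul : 4 / (1 - ρ) * (1 - ‖(a : ℂ)‖) ≤ 4 / (1 - ρ) * ((1 - ρ) / 8) :=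
        mul_le_mul_of_nonneg_left (by linarith) (by positivity)
      have h4 : 4 / (1 - ρ) * ((1 - ρ) / 8) = 1 / 2 := by
        field_simp
        norm_num
      linarith
    have hblas_ne : ∀ a : A, a ∉ F → ∀ z : ℂ, ‖z‖ < ρ → blas (a : ℂ) z ≠ 0 := by
      intro a ha z hzρ h0
      have := hhalf a ha z hzρ
      rw [h0] at this
      simp at this
      linarith
    have hslit : ∀ a : A, a ∉ F → ∀ z : ℂ, ‖z‖ < ρ →
        blas (a : ℂ) z ∈ Complex.slitPlane := by
      intro a ha z hzρ
      have h1 := hhalf a ha z hzρ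
      have h2 : (1 - blas (a : ℂ) z).re ≤ ‖1 - blas (a : ℂ) z‖ := Complex.re_le_norm _
      have h3 : (1 - blas (a : ℂ) z).re = 1 - (blas (a : ℂ) z).re := by simp
      rw [Complex.mem_slitPlane_iff]
      left
      linarith
    set u : A → ℝ := fun a => 6 / (1 - ρ) * (1 - ‖(a : ℂ)‖) with hudef
    have hu : Summable fun a : (Fᶜ : Set A) => u (a : A) := by
      exact (hS.mul_left (6 / (1 - ρ))).subtype _
    have hlog : ∀ (a : (Fᶜ : Set A)) (z : ℂ), z ∈ ball (0 : ℂ) ρ →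
        ‖Complex.log (blas ((a : A) : ℂ) z)‖ ≤ u (a : A) := by
      intro a z hz
      have hzρ : ‖z‖ < ρ := by simpa [mem_ball, Complex.dist_eq] using hz
      have h1 := hhalf (a : A) a.2 z hzρ
      have h2 : ‖blas ((a : A) : ℂ) z - 1‖ ≤ 1/2 := by
        rw [← norm_neg]
        simpa [neg_sub] using h1
      have h3 := Complex.norm_log_one_add_half_le_self h2
      have h4 : (1 : ℂ) + (blas ((a : A) : ℂ) z - 1) = blas ((a : A) : ℂ) z := by ring
      rw [h4] at h3
      refine h3.trans ?_
      rw [← norm_neg, neg_sub, hudef]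
      have h5 := htail (a : A) a.2 z hzρ
      have h8 : (0:ℝ) < 1 - ρ := by linarith
      have : (3:ℝ)/2 * (4 / (1 - ρ) * (1 - ‖((a : A) : ℂ)‖)) =
          6 / (1 - ρ) * (1 - ‖((a : A) : ℂ)‖) := by ring
      nlinarith [norm_nonneg (1 - blas ((a : A) : ℂ) z)]
    set L : ℂ → ℂ := fun z => ∑' a : (Fᶜ : Set A), Complex.log (blas ((a : A) : ℂ) z) with hLdef
    have hball : ball (0 : ℂ) ρ ⊆ ball (0 : ℂ) 1 := ball_subset_ball hρ1.le
    have hLdiff : DifferentiableOn ℂ L (ball (0 : ℂ) ρ) := by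
      refine differentiableOn_tsum_of_summable_norm hu ?_ isOpen_ball hlog
      intro a
      refine DifferentiableOn.clog ((blas_diff (habsA (a : A))).mono hball) ?_
      intro z hz
      exact hslit (a : A) a.2 z (by simpa [mem_ball, Complex.dist_eq] using hz)
    have htailProd : ∀ z ∈ ball (0 : ℂ) ρ,
        HasProd (fun a : (Fᶜ : Set A) => blas ((a : A) : ℂ) z) (Complex.exp (L z)) := by
      intro z hz
      have hsum : Summable fun a : (Fᶜ : Set A) => Complex.log (blas ((a : A) : ℂ) z) :=
        Summable.of_norm_bounded hu (fun a => hlog a z hz)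
      have h1 := hsum.hasSum.cexp
      exact h1.congr_fun fun a => (Complex.exp_log (hblas_ne (a : A) a.2 z
        (by simpa [mem_ball, Complex.dist_eq] using hz))).symm
    have hPhi_eq : ∀ z ∈ ball (0 : ℂ) ρ,
        Φ z = (∏ a : F, blas ((a : A) : ℂ) z) * Complex.exp (L z) := by
      intro z hz
      have hmc : Multipliable fun a : (Fᶜ : Set A) => blas ((a : A) : ℂ) z :=
        ⟨_, htailProd z hz⟩
      have hmF : Multipliable fun a : F => blas ((a : A) : ℂ) z :=
        ⟨_, hasProd_fintype _⟩
      have hsplit := Multipliable.tprod_mul_tprod_compl (f := fun a : A => blas (a : ℂ) z) hmF hmc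
      show (∏' a : A, blas (a : ℂ) z) = _
      rw [← hsplit, tprod_fintype, (htailProd z hz).tprod_eq]
    constructor
    · refine DifferentiableOn.congr ?_ hPhi_eq
      refine DifferentiableOn.mul ?_ hLdiff.cexp
      refine DifferentiableOn.fun_finsetProd ?_
      intro a _
      exact (blas_diff (habsA (a : A))).mono hball
    · intro z hz hzA
      rw [hPhi_eq z hz]
      apply mul_ne_zero
      · rw [Finset.prod_ne_zero_iff]
        intro a _
        refine blas_ne_zero (habsA (a : A))
          (by simpa [mem_ball, Complex.dist_eq] using hball hz) ?_
        intro h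
        exact hzA (h ▸ (a : A).2)
      · exact Complex.exp_ne_zero _
  -- global differentiability
  have hdiff : DifferentiableOn ℂ Φ (ball (0 : ℂ) 1) := by
    intro z hz
    have hz1 : ‖z‖ < 1 := by simpa [mem_ball, Complex.dist_eq] using hz
    set ρ : ℝ := (1 + ‖z‖) / 2 with hρdef
    have hρ0 : 0 < ρ := by positivity
    have hρ1 : ρ < 1 := by rw [hρdef]; linarith
    have hzρ : z ∈ ball (0 : ℂ) ρ := by
      rw [mem_ball, Complex.dist_eq]
      simp only [sub_zero, hρdef]
      linarith
    exact (((key ρ hρ0 hρ1).1 z hzρ).differentiableAt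
      (isOpen_ball.mem_nhds hzρ)).differentiableWithinAt
  -- find a point outside A
  have hct : A.Countable := by
    have h1 := hS.countable_support
    have h2 : Function.support (fun a : A => 1 - ‖(a : ℂ)‖) = Set.univ := by
      ext a
      simp only [Function.mem_support, mem_univ, iff_true]
      exact (hpos a).ne'
    rw [h2] at h1
    haveI : Countable A := Set.countable_univ_iff.mp h1
    exact Set.countable_coe_iff.mp this
  obtain ⟨z₀, hz₀b, hz₀A⟩ : ∃ z₀ ∈ ball (0 : ℂ) 1, z₀ ∉ A := by
    by_contra h
    push_neg at h
    have hsub : ball (0 : ℂ) 1 ⊆ A := h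
    have h1 : MeasureTheory.volume (ball (0 : ℂ) 1) = 0 :=
      MeasureTheory.measure_mono_null hsub (hct.measure_zero _)
    have h2 : 0 < MeasureTheory.volume (ball (0 : ℂ) 1) :=
      measure_ball_pos _ _ one_pos
    exact h2.ne' h1
  have hz₀1 : ‖z₀‖ < 1 := by simpa [mem_ball, Complex.dist_eq] using hz₀b
  have hΦz₀ : Φ z₀ ≠ 0 := by
    set ρ : ℝ := (1 + ‖z₀‖) / 2 with hρdef
    have hρ0 : 0 < ρ := by positivity
    have hρ1 : ρ < 1 := by rw [hρdef]; linarith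
    have hzρ : z₀ ∈ ball (0 : ℂ) ρ := by
      rw [mem_ball, Complex.dist_eq]
      simp only [sub_zero, hρdef]
      linarith
    exact (key ρ hρ0 hρ1).2 z₀ hzρ hz₀A
  -- final contradiction
  have hBH : BddHolo Φ (ball (0 : ℂ) 1) := ⟨hdiff, 1, habsle⟩
  have hd := hdom Φ hBH
  have hL : sSup ((fun z => ‖Φ z‖) '' A) ≤ 0 := by
    apply Real.sSup_le _ le_rfl
    rintro x ⟨a, ha, rfl⟩
    show ‖Φ a‖ ≤ 0
    rw [hzero a ha]
    simp
  have hbdd : BddAbove ((fun z => ‖Φ z‖) '' ball (0 : ℂ) 1) := by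
    refine ⟨1, ?_⟩
    rintro x ⟨z, hz, rfl⟩
    exact habsle z hz
  have hR : ‖Φ z₀‖ ≤ sSup ((fun z => ‖Φ z‖) '' ball (0 : ℂ) 1) :=
    le_csSup hbdd ⟨z₀, hz₀b, rfl⟩
  have hpos0 : 0 < ‖Φ z₀‖ := norm_pos_iff.mpr hΦz₀
  rw [← hd] at hR
  linarith
end

section
/- Let H be a complex Hilbert space (inner product ⟨·,·⟩ conjugate-linear in the second argument), X a set, b : X → H a map with ‖b(x)‖ < 1 for all x ∈ X, and ξ ∈ H with ‖ξ‖ = 1. Then for every n ∈ ℕ and all points x₁, …, xₙ ∈ X, the n × n complex matrix M with entries M_{ij} = (1 − ⟨b(x_i), ξ⟩ · conj(⟨b(x_j), ξ⟩)) / (1 − ⟨b(x_i), b(x_j)⟩) is positive semidefinite. (The denominators are nonzero since |⟨b(x_i), b(x_j)⟩| ≤ ‖b(x_i)‖‖b(x_j)‖ < 1.) -/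
open Complex Matrix ComplexOrder

/-- The inner product with the paper's convention: linear in the first argument
and conjugate-linear in the second argument (Mathlib's `inner` is conjugate-linear
in the *first* argument, so we swap). -/
noncomputable def innerPaper {H : Type*} [NormedAddCommGroup H] [InnerProductSpace ℂ H]
    (u v : H) : ℂ := inner ℂ v u

section aux

variable {H : Type*} [NormedAddCommGroup H] [InnerProductSpace ℂ H] {n : ℕ}

/-- A Gram matrix is positive semidefinite. -/
lemma gram_psd (v : Fin n → H) :
    Matrix.PosSemidef (Matrix.of fun i j : Fin n => (inner ℂ (v j) (v i) : ℂ)) := by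
  refine Matrix.PosSemidef.of_dotProduct_mulVec_nonneg ?_ ?_
  · ext i j
    simp [Matrix.conjTranspose_apply, inner_conj_symm]
  · intro c
    have key : star c ⬝ᵥ (Matrix.of fun i j : Fin n => (inner ℂ (v j) (v i) : ℂ)) *ᵥ c
        = (inner ℂ (∑ i, (starRingEnd ℂ) (c i) • v i) (∑ i, (starRingEnd ℂ) (c i) • v i) : ℂ) := by
      have h1 : star c ⬝ᵥ (Matrix.of fun i j : Fin n => (inner ℂ (v j) (v i) : ℂ)) *ᵥ c
          = ∑ i, ∑ j, (starRingEnd ℂ) (c i) * c j * inner ℂ (v j) (v i) := by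
        simp only [dotProduct, mulVec, Matrix.of_apply, Finset.mul_sum, Pi.star_apply,
          Complex.star_def]
        exact Finset.sum_congr rfl fun i _ => Finset.sum_congr rfl fun j _ => by ring
      have h2 : (inner ℂ (∑ i, (starRingEnd ℂ) (c i) • v i)
            (∑ i, (starRingEnd ℂ) (c i) • v i) : ℂ)
          = ∑ i, ∑ j, (starRingEnd ℂ) (c i) * c j * inner ℂ (v j) (v i) := by
        simp only [sum_inner, inner_sum, inner_smul_left, inner_smul_right,
          Complex.conj_conj, Finset.mul_sum]
        exact Finset.sum_congr rfl fun a _ => Finset.sum_congr rfl fun b _ => by ring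
      rw [h1, h2]
    rw [key, inner_self_eq_norm_sq_to_K]
    norm_cast
    positivity

lemma quad_eq (A : Matrix (Fin n) (Fin n) ℂ) (c : Fin n → ℂ) :
    star c ⬝ᵥ A *ᵥ c = ∑ i, ∑ j, (star (c i) * c j) * A i j := by
  simp only [dotProduct, mulVec, Pi.star_apply, Finset.mul_sum]
  refine Finset.sum_congr rfl fun i _ => Finset.sum_congr rfl fun j _ => by ring

lemma sum_comm₃ (F : Fin n → Fin n → Fin n → ℂ) :
    ∑ i, ∑ j, ∑ r, F i j r = ∑ r, ∑ i, ∑ j, F i j r :=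
  calc ∑ i, ∑ j, ∑ r, F i j r = ∑ i, ∑ r, ∑ j, F i j r :=
        Finset.sum_congr rfl fun i _ => Finset.sum_comm
    _ = ∑ r, ∑ i, ∑ j, F i j r := Finset.sum_comm

/-- Schur product theorem (for complex matrices). -/
lemma hadamard_psd {A B : Matrix (Fin n) (Fin n) ℂ} (hA : A.PosSemidef) (hB : B.PosSemidef) :
    Matrix.PosSemidef (Matrix.of fun i j : Fin n => A i j * B i j) := by
  open scoped MatrixOrder in
  obtain ⟨V, hV⟩ := CStarAlgebra.nonneg_iff_eq_star_mul_self.mp hA.nonneg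
  refine Matrix.PosSemidef.of_dotProduct_mulVec_nonneg ?_ ?_
  · ext i j
    simp only [Matrix.conjTranspose_apply, Matrix.of_apply, star_mul']
    rw [hA.isHermitian.apply, hB.isHermitian.apply, mul_comm]
  · intro c
    rw [quad_eq]
    have key : ∑ i, ∑ j, (star (c i) * c j) * ((Matrix.of fun i j : Fin n => A i j * B i j) i j)
        = ∑ r, star (fun j => V r j * c j) ⬝ᵥ B *ᵥ (fun j => V r j * c j) := by
      have e1 : ∀ i j : Fin n, (star (c i) * c j) * ((Matrix.of fun i j : Fin n => A i j * B i j) i j)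
          = ∑ r, (star (V r i * c i) * (V r j * c j)) * B i j := by
        intro i j
        rw [Matrix.of_apply, hV]
        simp only [Matrix.mul_apply, Matrix.conjTranspose_apply, Matrix.star_apply]
        rw [Finset.sum_mul, Finset.mul_sum]
        exact Finset.sum_congr rfl fun r _ => by simp only [star_mul']; ring
      simp only [e1]
      rw [sum_comm₃ (fun i j r => (star (V r i * c i) * (V r j * c j)) * B i j)]
      refine Finset.sum_congr rfl fun r _ => ?_
      rw [quad_eq]
    rw [key]
    exact Finset.sum_nonneg fun r _ => hB.dotProduct_mulVec_nonneg _

lemma psd_add {A B : Matrix (Fin n) (Fin n) ℂ} (hA : A.PosSemidef) (hB : B.PosSemidef) :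
    (A + B).PosSemidef :=
  .of_dotProduct_mulVec_nonneg (hA.1.add hB.1) fun c => by
    rw [Matrix.add_mulVec, dotProduct_add]
    exact add_nonneg (hA.dotProduct_mulVec_nonneg c) (hB.dotProduct_mulVec_nonneg c)

end aux

theorem stmt_4 {H : Type*} [NormedAddCommGroup H] [InnerProductSpace ℂ H]
    [CompleteSpace H] {X : Type*} (b : X → H) (hb : ∀ x, ‖b x‖ < 1)
    (ξ : H) (hξ : ‖ξ‖ = 1) (n : ℕ) (x : Fin n → X) :
    Matrix.PosSemidef (Matrix.of fun i j : Fin n =>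
      (1 - innerPaper (b (x i)) ξ * (starRingEnd ℂ) (innerPaper (b (x j)) ξ)) /
        (1 - innerPaper (b (x i)) (b (x j)))) := by
  classical
  set s : Fin n → ℂ := fun i => inner ℂ ξ (b (x i)) with hs
  set t : Fin n → Fin n → ℂ := fun i j => inner ℂ (b (x j)) (b (x i)) with ht
  have htlt : ∀ i j, ‖t i j‖ < 1 := by
    intro i j
    calc ‖t i j‖ ≤ ‖b (x j)‖ * ‖b (x i)‖ := norm_inner_le_norm _ _
    _ < 1 := by nlinarith [hb (x j), hb (x i), norm_nonneg (b (x j)), norm_nonneg (b (x i))]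
  have hne : ∀ i j, (1 : ℂ) - t i j ≠ 0 := by
    intro i j h
    have h1 : t i j = 1 := (sub_eq_zero.mp h).symm
    have h2 := htlt i j
    rw [h1] at h2
    simp at h2
  set u : Fin n → H := fun i => b (x i) - s i • ξ with hu
  have hξ1 : (inner ℂ ξ ξ : ℂ) = 1 := by
    rw [inner_self_eq_norm_sq_to_K, hξ]; norm_num
  have hG : ∀ i j, (inner ℂ (u j) (u i) : ℂ) = t i j - s i * (starRingEnd ℂ) (s j) := by
    intro i j
    simp only [hu, inner_sub_left, inner_sub_right, inner_smul_left, inner_smul_right, hξ1]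
    rw [show (inner ℂ (b (x j)) ξ : ℂ) = (starRingEnd ℂ) (s j) from (inner_conj_symm _ _).symm]
    simp only [hs, ht]
    ring
  have hgram := gram_psd u
  have hT := gram_psd (fun i => b (x i))
  have hJ : Matrix.PosSemidef (Matrix.of fun _ _ : Fin n => (1 : ℂ)) := by
    have h := gram_psd (fun _ : Fin n => ξ)
    have he : (Matrix.of fun _ _ : Fin n => (1 : ℂ))
        = Matrix.of fun i j : Fin n => (inner ℂ ξ ξ : ℂ) := by
      ext i j; simp [hξ1, hξ]
    rw [he]; exact h
  have hpow : ∀ k : ℕ, Matrix.PosSemidef (Matrix.of fun i j : Fin n => t i j ^ k) := by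
    intro k
    induction k with
    | zero => simpa using hJ
    | succ k ih =>
      have h := hadamard_psd hT ih
      have he : (Matrix.of fun i j : Fin n => t i j ^ (k + 1))
          = Matrix.of fun i j : Fin n =>
              (Matrix.of fun i j : Fin n => (inner ℂ (b (x j)) (b (x i)) : ℂ)) i j
                * (Matrix.of fun i j : Fin n => t i j ^ k) i j := by
        ext i j; simp [ht, pow_succ']
      rw [he]; exact h
  have hA : ∀ k : ℕ, Matrix.PosSemidef
      (Matrix.of fun i j : Fin n => (t i j - s i * (starRingEnd ℂ) (s j)) * t i j ^ k) := by
    intro k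
    have h := hadamard_psd hgram (hpow k)
    have he : (Matrix.of fun i j : Fin n => (t i j - s i * (starRingEnd ℂ) (s j)) * t i j ^ k)
        = Matrix.of fun i j : Fin n =>
            (Matrix.of fun i j : Fin n => (inner ℂ (u j) (u i) : ℂ)) i j
              * (Matrix.of fun i j : Fin n => t i j ^ k) i j := by
      ext i j; simp [hG]
    rw [he]; exact h
  have hsummable : ∀ i j, Summable (fun k : ℕ =>
      (t i j - s i * (starRingEnd ℂ) (s j)) * t i j ^ k) :=
    fun i j => (summable_geometric_of_norm_lt_one (htlt i j)).mul_left _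
  have hentry : ∀ i j,
      (1 - innerPaper (b (x i)) ξ * (starRingEnd ℂ) (innerPaper (b (x j)) ξ)) /
        (1 - innerPaper (b (x i)) (b (x j)))
      = 1 + ∑' k : ℕ, (t i j - s i * (starRingEnd ℂ) (s j)) * t i j ^ k := by
    intro i j
    rw [tsum_mul_left, tsum_geometric_of_norm_lt_one (htlt i j)]
    show (1 - s i * (starRingEnd ℂ) (s j)) / (1 - t i j)
        = 1 + (t i j - s i * (starRingEnd ℂ) (s j)) * (1 - t i j)⁻¹
    rw [div_eq_iff (hne i j)]
    have hinv : (1 - t i j)⁻¹ * (1 - t i j) = 1 := inv_mul_cancel₀ (hne i j)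
    linear_combination -(t i j - s i * (starRingEnd ℂ) (s j)) * hinv
  have hMeq : (Matrix.of fun i j : Fin n =>
      (1 - innerPaper (b (x i)) ξ * (starRingEnd ℂ) (innerPaper (b (x j)) ξ)) /
        (1 - innerPaper (b (x i)) (b (x j))))
      = (Matrix.of fun _ _ : Fin n => (1 : ℂ))
        + Matrix.of fun i j : Fin n =>
            ∑' k : ℕ, (t i j - s i * (starRingEnd ℂ) (s j)) * t i j ^ k := by
    ext i j
    simp only [Matrix.of_apply, Matrix.add_apply]
    exact hentry i j
  rw [hMeq]
  refine psd_add hJ ?_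
  refine Matrix.PosSemidef.of_dotProduct_mulVec_nonneg ?_ ?_
  · ext i j
    simp only [Matrix.conjTranspose_apply, Matrix.of_apply]
    rw [tsum_star]
    refine tsum_congr fun k => ?_
    simp only [star_mul', star_sub, star_pow, Complex.star_def]
    rw [show (starRingEnd ℂ) (t j i) = t i j from by simp [ht, inner_conj_symm]]
    rw [show (starRingEnd ℂ) ((starRingEnd ℂ) (s i)) = s i from by simp]
    ring
  · intro c
    rw [quad_eq]
    set f : ℕ → Fin n → Fin n → ℂ :=
      fun k i j => (t i j - s i * (starRingEnd ℂ) (s j)) * t i j ^ k with hf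
    have hsum2 : ∀ i j : Fin n, Summable (fun k : ℕ => (star (c i) * c j) * f k i j) :=
      fun i j => (hsummable i j).mul_left _
    have key : ∑ i, ∑ j, (star (c i) * c j) *
        ((Matrix.of fun i j : Fin n => ∑' k : ℕ, f k i j) i j)
        = ∑' k : ℕ, ∑ i, ∑ j, (star (c i) * c j) * f k i j := by
      calc ∑ i, ∑ j, (star (c i) * c j) * ((Matrix.of fun i j : Fin n => ∑' k : ℕ, f k i j) i j)
          = ∑ i, ∑ j, ∑' k : ℕ, (star (c i) * c j) * f k i j :=
            Finset.sum_congr rfl fun i _ => Finset.sum_congr rfl fun j _ => tsum_mul_left.symm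
        _ = ∑ i, ∑' k : ℕ, ∑ j, (star (c i) * c j) * f k i j :=
            Finset.sum_congr rfl fun i _ => (Summable.tsum_finsetSum fun j _ => hsum2 i j).symm
        _ = ∑' k : ℕ, ∑ i, ∑ j, (star (c i) * c j) * f k i j :=
            (Summable.tsum_finsetSum fun i _ => (hasSum_sum fun j _ => (hsum2 i j).hasSum).summable).symm
    rw [key]
    refine tsum_nonneg fun k => ?_
    have h := (hA k).dotProduct_mulVec_nonneg c
    rw [quad_eq] at h
    exact h
end

section
/- Let E ⊆ 𝔻 be relatively closed in 𝔻 with 𝔻 \ E nonempty, and suppose every bounded holomorphic function on 𝔻 \ E admits a holomorphic extension to 𝔻. Then the Möbius pseudo-distance of 𝔻 \ E coincides with the pseudo-hyperbolic distance: for all z, w ∈ 𝔻 \ E, sup { ρ(f(z), f(w)) : f holomorphic on 𝔻 \ E with f(𝔻 \ E) ⊆ 𝔻 } = ρ(z, w), where ρ(z,w) = |(z − w)/(1 − conj(w)·z)|. -/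
open Complex Metric Set

/-- The pseudo-hyperbolic distance on the open unit disc. -/
noncomputable def pseudoHyp (z w : ℂ) : ℝ :=
  ‖(z - w) / (1 - (starRingEnd ℂ) w * z)‖

noncomputable def moeb (a z : ℂ) : ℂ := (z - a) / (1 - (starRingEnd ℂ) a * z)

lemma moeb_den_ne (a z : ℂ) (ha : ‖a‖ < 1) (hz : ‖z‖ < 1) :
    1 - (starRingEnd ℂ) a * z ≠ 0 := by
  intro h
  have h1 : (starRingEnd ℂ) a * z = 1 := by linear_combination -h
  have : ‖(starRingEnd ℂ) a * z‖ = 1 := by simp [h1]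
  rw [norm_mul, Complex.norm_conj] at this
  nlinarith [norm_nonneg a, norm_nonneg z]

lemma moeb_abs_lt (a z : ℂ) (ha : ‖a‖ < 1) (hz : ‖z‖ < 1) :
    ‖moeb a z‖ < 1 := by
  have hden := moeb_den_ne a z ha hz
  rw [moeb, norm_div, div_lt_one (norm_pos_iff.mpr hden)]
  have h1 : Complex.normSq (z - a) < Complex.normSq (1 - (starRingEnd ℂ) a * z) := by
    rw [Complex.normSq_sub, Complex.normSq_sub, Complex.normSq_mul, Complex.normSq_conj]
    have e : (1 * (starRingEnd ℂ) ((starRingEnd ℂ) a * z)).re = (z * (starRingEnd ℂ) a).re := by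
      simp [Complex.mul_re, Complex.conj_re, Complex.conj_im]; ring
    rw [e]
    have hna : Complex.normSq a < 1 := by
      rw [← Complex.sq_norm]; nlinarith [norm_nonneg a]
    have hnz : Complex.normSq z < 1 := by
      rw [← Complex.sq_norm]; nlinarith [norm_nonneg z]
    simp only [Complex.normSq_one]
    nlinarith [Complex.normSq_nonneg a, Complex.normSq_nonneg z]
  have h2 := Real.sqrt_lt_sqrt (Complex.normSq_nonneg _) h1
  rwa [← Complex.norm_def, ← Complex.norm_def] at h2

lemma moeb_inv (a z : ℂ) (ha : ‖a‖ < 1) (hz : ‖z‖ < 1) :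
    moeb (-a) (moeb a z) = z := by
  have hden := moeb_den_ne a z ha hz
  have hden3 := moeb_den_ne a a ha ha
  have hden2 : 1 - (starRingEnd ℂ) (-a) * moeb a z ≠ 0 :=
    moeb_den_ne (-a) (moeb a z) (by simpa using ha) (moeb_abs_lt a z ha hz)
  rw [moeb] at hden2
  rw [moeb, moeb]
  rw [div_sub' hden, ← mul_div_assoc, one_sub_div hden, div_div_div_cancel_right₀ hden]
  · rw [div_eq_iff]
    · simp only [map_neg]; ring
    · intro h; apply hden2; rw [mul_div_assoc', one_sub_div hden, h, zero_div]

lemma moeb_self (a : ℂ) : moeb a a = 0 := by simp [moeb]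

lemma abs_lt_of_mem {z : ℂ} (h : z ∈ ball (0:ℂ) 1) : ‖z‖ < 1 := by
  exact mem_ball_zero_iff.1 h

lemma mem_of_abs_lt {z : ℂ} (h : ‖z‖ < 1) : z ∈ ball (0:ℂ) 1 :=
  mem_ball_zero_iff.2 (by exact h)

lemma moeb_diffOn (a : ℂ) (ha : ‖a‖ < 1) :
    DifferentiableOn ℂ (moeb a) (ball (0:ℂ) 1) := by
  apply DifferentiableOn.div (by fun_prop) (by fun_prop)
  exact fun z hz => moeb_den_ne a z ha (abs_lt_of_mem hz)

lemma pseudoHyp_eq (z w : ℂ) : pseudoHyp z w = ‖moeb w z‖ := rfl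

lemma pseudoHyp_zero (x : ℂ) : pseudoHyp x 0 = ‖x‖ := by simp [pseudoHyp]

lemma schwarzPick {F : ℂ → ℂ} (hd : DifferentiableOn ℂ F (ball (0:ℂ) 1))
    (hm : MapsTo F (ball (0:ℂ) 1) (ball (0:ℂ) 1)) {z w : ℂ}
    (hz : z ∈ ball (0:ℂ) 1) (hw : w ∈ ball (0:ℂ) 1) :
    pseudoHyp (F z) (F w) ≤ pseudoHyp z w := by
  have hz' := abs_lt_of_mem hz
  have hw' := abs_lt_of_mem hw
  have hFw : ‖F w‖ < 1 := abs_lt_of_mem (hm hw)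
  have hmw : MapsTo (moeb (-w)) (ball (0:ℂ) 1) (ball (0:ℂ) 1) := fun ζ hζ =>
    mem_of_abs_lt (moeb_abs_lt _ _ (by simpa using hw') (abs_lt_of_mem hζ))
  set g : ℂ → ℂ := fun ζ => moeb (F w) (F (moeb (-w) ζ)) with hg
  have hgd : DifferentiableOn ℂ g (ball (0:ℂ) 1) :=
    ((moeb_diffOn (F w) hFw).comp hd hm).comp (moeb_diffOn (-w) (by simpa using hw')) hmw
  have hgm : MapsTo g (ball (0:ℂ) 1) (ball (0:ℂ) 1) := fun ζ hζ =>
    mem_of_abs_lt (moeb_abs_lt _ _ hFw (abs_lt_of_mem (hm (hmw hζ))))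
  have hg0 : g 0 = 0 := by
    have h1 : moeb (-w) 0 = w := by simp [moeb]
    simp [hg, h1, moeb_self]
  have hmz : ‖moeb w z‖ < 1 := moeb_abs_lt w z hw' hz'
  have key := Complex.norm_le_norm_of_mapsTo_ball hgd (hgm.mono_right ball_subset_closedBall) hg0 hmz
  have h2 : g (moeb w z) = moeb (F w) (F z) := by
    rw [hg]; simp only []; rw [moeb_inv w z hw' hz']
  rw [h2] at key
  simpa [pseudoHyp_eq] using key

theorem stmt_9 (E : Set ℂ) (hE : E ⊆ ball (0 : ℂ) 1)
    (hrelclosed : IsOpen (ball (0 : ℂ) 1 \ E))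
    (hne : (ball (0 : ℂ) 1 \ E).Nonempty)
    (hext : ∀ f : ℂ → ℂ, BddHolo f (ball (0 : ℂ) 1 \ E) →
      ∃ F : ℂ → ℂ, DifferentiableOn ℂ F (ball (0 : ℂ) 1) ∧
        ∀ z ∈ ball (0 : ℂ) 1 \ E, F z = f z) :
    ∀ z ∈ ball (0 : ℂ) 1 \ E, ∀ w ∈ ball (0 : ℂ) 1 \ E,
      sSup {r : ℝ | ∃ f : ℂ → ℂ, DifferentiableOn ℂ f (ball (0 : ℂ) 1 \ E) ∧
          Set.MapsTo f (ball (0 : ℂ) 1 \ E) (ball (0 : ℂ) 1) ∧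
          r = pseudoHyp (f z) (f w)} = pseudoHyp z w := by
  intro z hz w hw
  obtain ⟨z₀, hz₀⟩ := hne
  have hpre : IsPreconnected (ball (0:ℂ) 1) := (convex_ball (0:ℂ) 1).isPreconnected
  -- Density of the complement
  have hdense : ∀ x ∈ ball (0:ℂ) 1, x ∈ closure (ball (0:ℂ) 1 \ E) := by
    intro x hx
    by_contra hcl
    rw [Metric.mem_closure_iff] at hcl
    push_neg at hcl
    obtain ⟨ε, hε, hsep⟩ := hcl
    have hdiff : DifferentiableOn ℂ (fun ζ => (ζ - x)⁻¹) (ball (0:ℂ) 1 \ E) := by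
      apply DifferentiableOn.inv (by fun_prop)
      intro ζ hζ
      intro h0
      have : ζ = x := by linear_combination h0
      exact absurd (by simp [this]; exact hε) (not_lt.2 (hsep ζ hζ))
    have hbdd : BddHolo (fun ζ => (ζ - x)⁻¹) (ball (0:ℂ) 1 \ E) := by
      refine ⟨hdiff, ε⁻¹, fun ζ hζ => ?_⟩
      rw [norm_inv]
      have h1 : ε ≤ ‖ζ - x‖ := by
        have := hsep ζ hζ
        rwa [Complex.dist_eq, ← norm_neg, neg_sub] at this
      exact inv_anti₀ hε h1
    obtain ⟨F, hFd, hFeq⟩ := hext _ hbdd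
    set G : ℂ → ℂ := fun ζ => F ζ * (ζ - x) - 1 with hG
    have hGd : DifferentiableOn ℂ G (ball (0:ℂ) 1) := by
      apply DifferentiableOn.sub_const
      exact hFd.mul (by fun_prop)
    have hGa : AnalyticOnNhd ℂ G (ball (0:ℂ) 1) := hGd.analyticOnNhd isOpen_ball
    have hGzero : G =ᶠ[nhds z₀] 0 := by
      filter_upwards [hrelclosed.mem_nhds hz₀] with ζ hζ
      have hζx : ζ - x ≠ 0 := by
        intro h0
        have : ζ = x := by linear_combination h0
        exact absurd (by simp [this]; exact hε) (not_lt.2 (hsep ζ hζ))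
      simp [hG, hFeq ζ hζ, inv_mul_cancel₀ hζx]
    have := hGa.eqOn_zero_of_preconnected_of_eventuallyEq_zero hpre hz₀.1 hGzero hx
    simp [hG] at this
  -- upper bound
  have hub : ∀ r ∈ {r : ℝ | ∃ f : ℂ → ℂ, DifferentiableOn ℂ f (ball (0 : ℂ) 1 \ E) ∧
      Set.MapsTo f (ball (0 : ℂ) 1 \ E) (ball (0 : ℂ) 1) ∧
      r = pseudoHyp (f z) (f w)}, r ≤ pseudoHyp z w := by
    rintro r ⟨f, hfd, hfm, rfl⟩
    have hbdd : BddHolo f (ball (0:ℂ) 1 \ E) :=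
      ⟨hfd, 1, fun ζ hζ => (abs_lt_of_mem (hfm hζ)).le⟩
    obtain ⟨F, hFd, hFeq⟩ := hext _ hbdd
    have hFle : ∀ ζ ∈ ball (0:ℂ) 1, ‖F ζ‖ ≤ 1 := by
      intro ζ hζ
      have hca : ContinuousAt F ζ :=
        (hFd.differentiableAt (isOpen_ball.mem_nhds hζ)).continuousAt
      have hnb : (nhdsWithin ζ (ball (0:ℂ) 1 \ E)).NeBot :=
        mem_closure_iff_nhdsWithin_neBot.1 (hdense ζ hζ)
      have htend : Filter.Tendsto (fun y => ‖F y‖) (nhdsWithin ζ (ball (0:ℂ) 1 \ E))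
          (nhds ‖F ζ‖) :=
        (continuous_norm.continuousAt.comp hca).continuousWithinAt.tendsto
      refine le_of_tendsto htend ?_
      filter_upwards [self_mem_nhdsWithin] with y hy
      rw [hFeq y hy]
      exact (abs_lt_of_mem (hfm hy)).le
    rw [← hFeq z hz, ← hFeq w hw]
    by_cases hex : ∃ ζ₀ ∈ ball (0:ℂ) 1, ‖F ζ₀‖ = 1
    · obtain ⟨ζ₀, hζ₀, hζ₀v⟩ := hex
      have hmax : IsMaxOn (norm ∘ F) (ball (0:ℂ) 1) ζ₀ := by
        intro y hy
        simp only [Function.comp, mem_setOf_eq]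
        rw [hζ₀v]
        exact hFle y hy
      have hconst := Complex.eqOn_of_isPreconnected_of_isMaxOn_norm hpre isOpen_ball hFd hζ₀ hmax
      have : F z = F w := by rw [hconst hz.1, hconst hw.1]; rfl
      rw [this, pseudoHyp_eq, moeb_self]
      simp [pseudoHyp]
      positivity
    · push_neg at hex
      have hFm : MapsTo F (ball (0:ℂ) 1) (ball (0:ℂ) 1) := fun y hy =>
        mem_of_abs_lt (lt_of_le_of_ne (hFle y hy) (hex y hy))
      exact schwarzPick hFd hFm hz.1 hw.1
  -- membership
  have hw' : ‖w‖ < 1 := abs_lt_of_mem hw.1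
  have hz' : ‖z‖ < 1 := abs_lt_of_mem hz.1
  have hmem : pseudoHyp z w ∈ {r : ℝ | ∃ f : ℂ → ℂ, DifferentiableOn ℂ f (ball (0 : ℂ) 1 \ E) ∧
      Set.MapsTo f (ball (0 : ℂ) 1 \ E) (ball (0 : ℂ) 1) ∧
      r = pseudoHyp (f z) (f w)} := by
    refine ⟨moeb w, (moeb_diffOn w hw').mono diff_subset, fun ζ hζ =>
      mem_of_abs_lt (moeb_abs_lt _ _ hw' (abs_lt_of_mem hζ.1)), ?_⟩
    rw [moeb_self, pseudoHyp_zero, pseudoHyp_eq]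
  exact le_antisymm (csSup_le ⟨_, hmem⟩ hub) (le_csSup ⟨_, hub⟩ hmem)
end

section
/- Let U ⊆ ℂ be a nonempty connected open set and let E ⊆ U be relatively closed in U with U \ E nonempty. Suppose every bounded holomorphic function on U \ E admits a holomorphic extension to U. Then for every compact set K ⊆ E, every bounded holomorphic function f on U \ K agrees on U \ K with (the restriction of) a bounded holomorphic function on U; that is, there exists F holomorphic and bounded on U with F(z) = f(z) for all z ∈ U \ K. -/
open Complex Set

theorem stmt_14 (U E : Set ℂ) (hUopen : IsOpen U) (hUne : U.Nonempty)
    (hUconn : IsConnected U) (hEU : E ⊆ U) (hrelclosed : IsOpen (U \ E))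
    (hne : (U \ E).Nonempty)
    (hext : ∀ f : ℂ → ℂ, BddHolo f (U \ E) →
      ∃ F : ℂ → ℂ, DifferentiableOn ℂ F U ∧ ∀ z ∈ U \ E, F z = f z) :
    ∀ K : Set ℂ, K ⊆ E → IsCompact K →
      ∀ f : ℂ → ℂ, BddHolo f (U \ K) →
        ∃ F : ℂ → ℂ, BddHolo F U ∧ ∀ z ∈ U \ K, F z = f z := by
  -- Step 1: `interior E = ∅`.
  have hIntE : interior E = ∅ := by
    by_contra h
    obtain ⟨z₀, hz₀⟩ := nonempty_iff_ne_empty.mpr h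
    obtain ⟨ε, hε, hball⟩ := Metric.mem_nhds_iff.mp (mem_interior_iff_mem_nhds.mp hz₀)
    have hz₀E : z₀ ∈ E := interior_subset hz₀
    have hz₀U : z₀ ∈ U := hEU hz₀E
    set g : ℂ → ℂ := fun z => (z - z₀)⁻¹ with hg
    have hnear : ∀ z ∈ U \ E, ε ≤ ‖z - z₀‖ := by
      intro z hz
      by_contra hlt
      push_neg at hlt
      exact hz.2 (hball (by simpa [Metric.mem_ball, Complex.dist_eq] using hlt))
    have hne0 : ∀ z ∈ U \ E, z - z₀ ≠ 0 := by
      intro z hz h0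
      have := hnear z hz
      rw [h0] at this
      simp at this
      linarith
    have hbd : BddHolo g (U \ E) := by
      constructor
      · exact DifferentiableOn.inv
          ((differentiable_id.sub (differentiable_const _)).differentiableOn) hne0
      · refine ⟨ε⁻¹, fun z hz => ?_⟩
        have h1 := hnear z hz
        simp only [hg, norm_inv]
        exact inv_anti₀ hε h1
    obtain ⟨F, hFdiff, hFeq⟩ := hext g hbd
    set h : ℂ → ℂ := fun z => (z - z₀) * F z - 1 with hh
    have hhdiff : DifferentiableOn ℂ h U :=
      (((differentiable_id.sub (differentiable_const _)).differentiableOn).mul hFdiff).sub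
        (differentiableOn_const _)
    have hhan : AnalyticOnNhd ℂ h U := hhdiff.analyticOnNhd hUopen
    obtain ⟨z₁, hz₁⟩ := hne
    have hev : h =ᶠ[nhds z₁] 0 := by
      filter_upwards [hrelclosed.mem_nhds hz₁] with w hw
      have : F w = g w := hFeq w hw
      simp only [hh, this, hg, Pi.zero_apply]
      field_simp [hne0 w hw]
      ring
    have hzero := hhan.eqOn_zero_of_preconnected_of_eventuallyEq_zero
      hUconn.isPreconnected hz₁.1 hev hz₀U
    simp [hh] at hzero
  -- Step 2: `U \ E` is dense in `U`.
  have hdense : ∀ z ∈ U, z ∈ closure (U \ E) := by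
    intro z hzU
    rw [mem_closure_iff]
    intro O hO hzO
    by_contra hempty
    rw [not_nonempty_iff_eq_empty] at hempty
    have hsub : O ∩ U ⊆ E := by
      intro w hw
      by_contra hwE
      have : w ∈ O ∩ (U \ E) := ⟨hw.1, hw.2, hwE⟩
      rw [hempty] at this
      exact this
    have : z ∈ interior E :=
      mem_interior.mpr ⟨O ∩ U, hsub, hO.inter hUopen, ⟨hzO, hzU⟩⟩
    rw [hIntE] at this
    exact this
  -- Step 3: main argument.
  intro K hKE hK f hf
  obtain ⟨hfdiff, M, hM⟩ := hf
  have hsubEK : U \ E ⊆ U \ K := diff_subset_diff_right hKE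
  have hbdres : BddHolo f (U \ E) :=
    ⟨hfdiff.mono hsubEK, M, fun z hz => hM z (hsubEK hz)⟩
  obtain ⟨F, hFdiff, hFeq⟩ := hext f hbdres
  have hUKopen : IsOpen (U \ K) := hUopen.sdiff hK.isClosed
  -- F = f on U \ K by density and continuity
  have heq : ∀ z ∈ U \ K, F z = f z := by
    intro z hz
    have hcF : ContinuousAt F z :=
      (hFdiff.differentiableAt (hUopen.mem_nhds hz.1)).continuousAt
    have hcf : ContinuousAt f z :=
      (hfdiff.differentiableAt (hUKopen.mem_nhds hz)).continuousAt
    have hNB : (nhdsWithin z (U \ E)).NeBot :=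
      mem_closure_iff_nhdsWithin_neBot.mp (hdense z hz.1)
    have h1 : Filter.Tendsto F (nhdsWithin z (U \ E)) (nhds (F z)) :=
      hcF.tendsto.mono_left nhdsWithin_le_nhds
    have h2 : Filter.Tendsto f (nhdsWithin z (U \ E)) (nhds (f z)) :=
      hcf.tendsto.mono_left nhdsWithin_le_nhds
    have h3 : Filter.Tendsto F (nhdsWithin z (U \ E)) (nhds (f z)) :=
      h2.congr' (Filter.eventuallyEq_of_mem self_mem_nhdsWithin
        (fun w hw => (hFeq w hw).symm))
    exact tendsto_nhds_unique h1 h3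
  -- Boundedness of F on U.
  have hKU : K ⊆ U := fun x hx => hEU (hKE hx)
  have hcont : ContinuousOn F K := hFdiff.continuousOn.mono hKU
  obtain ⟨C, hC⟩ := hK.exists_bound_of_continuousOn hcont
  refine ⟨F, ⟨hFdiff, max M C, fun z hzU => ?_⟩, heq⟩
  by_cases hzK : z ∈ K
  · exact le_trans (by simpa using hC z hzK) (le_max_right _ _)
  · have := hM z ⟨hzU, hzK⟩
    rw [heq z ⟨hzU, hzK⟩]
    exact le_trans this (le_max_left _ _)
end
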